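/- Let X_n be positive random variables, a_n arbitrary real numbers, and b_n > 0 with b_n → 0 as n → ∞. Then ln X_n ~ ASN(a_n, b_n) if and only if X_n ~ ASN(e^{a_n}, b_n e^{2 a_n}). That is, (ln X_n − a_n)/√b_n converges in distribution to N(0,1) if and only if (X_n − e^{a_n})/(√b_n · e^{a_n}) converges in distribution to N(0,1). -/

import Mathlib

open MeasureTheory ProbabilityTheory Filter Topology
open scoped ENNReal

/-- `X n ~ ASN(a n, b n)` is expressed as: `(X n - a n)/√(b n)` converges in distribution
to the measure `ν` (here the standard normal), where convergence in distribution is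
tested against all bounded continuous functions. -/
def TendstoInDistribution {Ω : Type*} [MeasurableSpace Ω] (μ : Measure Ω)
    (X : ℕ → Ω → ℝ) (ν : Measure ℝ) : Prop :=
  ∀ f : BoundedContinuousFunction ℝ ℝ,
    Tendsto (fun n => ∫ ω, f (X n ω) ∂μ) atTop (𝓝 (∫ x, f x ∂ν))

/-- Second-order estimate for `log (1+t)` near `0`. -/
lemma abs_log_one_add_sub_le {t : ℝ} (ht : |t| ≤ 1/2) : |Real.log (1+t) - t| ≤ 4 * t^2 := by
  obtain ⟨htl, htr⟩ := abs_le.mp ht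
  have h1 : (0:ℝ) < 1 + t := by linarith
  set u := Real.log (1+t) with hu
  have heu : Real.exp u = 1 + t := Real.exp_log h1
  have habs : |u| ≤ 2 * |t| := by
    rcases le_or_gt 0 t with h | h
    · have h2 : u ≤ t := by
        have := Real.log_le_sub_one_of_pos h1; simp only [hu]; linarith
      have h3 : 0 ≤ u := Real.log_nonneg (by linarith)
      rw [abs_of_nonneg h3, abs_of_nonneg h]; linarith
    · have h3 : u ≤ 0 := Real.log_nonpos (by linarith) (by linarith)
      have h4 : Real.log (1+t)⁻¹ ≤ (1+t)⁻¹ - 1 := Real.log_le_sub_one_of_pos (by positivity)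
      rw [Real.log_inv] at h4
      have h5 : (1+t)⁻¹ ≤ 2 := by
        have h6 : (1:ℝ)/2 ≤ 1 + t := by linarith
        calc (1+t)⁻¹ ≤ ((1:ℝ)/2)⁻¹ := by
              exact inv_anti₀ (by norm_num) h6
          _ = 2 := by norm_num
      have h6 : (1+t)⁻¹ - 1 = (-t) * (1+t)⁻¹ := by field_simp; ring
      have h7 : (-t) * (1+t)⁻¹ ≤ (-t) * 2 :=
        mul_le_mul_of_nonneg_left h5 (by linarith)
      rw [abs_of_nonpos h3, abs_of_neg h]
      have h8 : -u ≤ (-t) * 2 := by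
        calc -u ≤ (1+t)⁻¹ - 1 := h4
          _ = (-t) * (1+t)⁻¹ := h6
          _ ≤ (-t) * 2 := h7
      linarith
  have hu1 : |u| ≤ 1 := by
    calc |u| ≤ 2 * |t| := habs
      _ ≤ 1 := by linarith [abs_le.mpr ⟨htl, htr⟩]
  have hexp := Real.abs_exp_sub_one_sub_id_le hu1
  rw [heu] at hexp
  have h9 : |u - t| ≤ u^2 := by
    have : 1 + t - 1 - u = -(u - t) := by ring
    rw [this, abs_neg] at hexp
    exact hexp
  have h8 : u^2 ≤ 4 * t^2 := by
    have := sq_abs u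
    have := sq_abs t
    nlinarith [abs_nonneg u, abs_nonneg t]
  calc |Real.log (1+t) - t| = |u - t| := rfl
    _ ≤ u^2 := h9
    _ ≤ 4 * t^2 := h8

/-- Key lemma: if probability measures `μs n` converge weakly to `ν` and the measurable maps
`g n` converge to the identity uniformly on compacts, then the integrals of `f ∘ g n`
against `μs n` converge to the integral of `f` against `ν`. -/
lemma key_tendsto {μs : ℕ → ProbabilityMeasure ℝ} {ν : ProbabilityMeasure ℝ}
    (h : Tendsto μs atTop (𝓝 ν)) {g : ℕ → ℝ → ℝ} (hgm : ∀ n, Measurable (g n))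
    (hg : ∀ M : ℝ, ∀ ε > 0, ∀ᶠ n in atTop, ∀ y : ℝ, |y| ≤ M → |g n y - y| ≤ ε)
    (f : BoundedContinuousFunction ℝ ℝ) :
    Tendsto (fun n => ∫ x, f (g n x) ∂(μs n : Measure ℝ)) atTop
      (𝓝 (∫ x, f x ∂(ν : Measure ℝ))) := by
  have hfint : ∀ n, Integrable (fun x => f (g n x)) (μs n : Measure ℝ) := fun n =>
    (integrable_const (‖f‖)).mono'
      ((f.continuous.measurable.comp (hgm n)).aestronglyMeasurable)
      (Eventually.of_forall fun x => f.norm_coe_le_norm _)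
  have hfint' : ∀ n, Integrable (fun x => f x) (μs n : Measure ℝ) := fun n => f.integrable _
  have hconv := ProbabilityMeasure.tendsto_iff_forall_integral_tendsto.mp h f
  have hD : Tendsto (fun n => ∫ x, (f (g n x) - f x) ∂(μs n : Measure ℝ)) atTop (𝓝 0) := by
    rw [NormedAddCommGroup.tendsto_nhds_zero]
    intro ε hε
    set δ : ℝ := ε / (2 * (1 + 2 * ‖f‖)) with hδdef
    have hnorm : (0:ℝ) < 1 + 2 * ‖f‖ := by positivity
    have hδ : 0 < δ := by positivity
    set d : ℝ≥0∞ := min (ENNReal.ofReal δ) 2⁻¹ with hddef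
    have hd0 : 0 < d := lt_min (ENNReal.ofReal_pos.mpr hδ) (by norm_num)
    have hdtop : d ≠ ∞ := by
      refine ne_top_of_le_ne_top ?_ (min_le_right _ _)
      norm_num
    have hd1 : d ≤ 1 := le_trans (min_le_right _ _) (by norm_num)
    obtain ⟨M, hM⟩ : ∃ M : ℕ, (ν : Measure ℝ) ((Set.Ioo (-(M:ℝ)) M)ᶜ) < d := by
      have hmono : Antitone (fun M : ℕ => (Set.Ioo (-(M:ℝ)) M)ᶜ) := by
        intro i j hij
        apply Set.compl_subset_compl.mpr
        apply Set.Ioo_subset_Ioo <;> · simp; exact_mod_cast hij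
      have hiInter : ⋂ M : ℕ, (Set.Ioo (-(M:ℝ)) M)ᶜ = ∅ := by
        rw [← Set.compl_iUnion]
        rw [Set.compl_empty_iff]
        ext x
        simp only [Set.mem_iUnion, Set.mem_Ioo, Set.mem_univ, iff_true]
        obtain ⟨M, hM⟩ := exists_nat_gt |x| 
        exact ⟨M, by cases abs_lt.mp hM; constructor <;> linarith⟩
      have htend := tendsto_measure_iInter_atTop (μ := (ν : Measure ℝ))
        (fun M => (measurableSet_Ioo.compl).nullMeasurableSet) hmono
        ⟨0, measure_ne_top _ _⟩
      rw [hiInter] at htend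
      simp only [Function.comp, measure_empty] at htend
      exact (htend.eventually_lt_const hd0).exists
    set U : Set ℝ := Set.Ioo (-(M:ℝ)) M with hUdef
    have hUopen : IsOpen U := isOpen_Ioo
    have hUmeas : MeasurableSet U := measurableSet_Ioo
    have hνU : 1 - d < (ν : Measure ℝ) U := by
      have hcompl : (ν : Measure ℝ) Uᶜ = 1 - (ν : Measure ℝ) U := by
        rw [measure_compl hUmeas (measure_ne_top _ _), measure_univ]
      rw [hcompl] at hM
      have hle : (ν : Measure ℝ) U ≤ 1 := prob_le_one
      have h1 := (ENNReal.sub_lt_iff_lt_right (measure_ne_top _ _) hle).mp hM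
      exact (ENNReal.sub_lt_iff_lt_right hdtop hd1).mpr (by rwa [add_comm] at h1)
    have hliminf := ProbabilityMeasure.le_liminf_measure_open_of_tendsto h hUopen
    have hev1 : ∀ᶠ n in atTop, 1 - d < (μs n : Measure ℝ) U :=
      eventually_lt_of_lt_liminf (lt_of_lt_of_le hνU hliminf)
    set K : Set ℝ := Set.Icc (-(M:ℝ) - 1) ((M:ℝ) + 1) with hKdef
    have hK : IsCompact K := isCompact_Icc
    have hfu := hK.uniformContinuousOn_of_continuous f.continuous.continuousOn
    rw [Metric.uniformContinuousOn_iff] at hfu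
    obtain ⟨δu, hδu, hδu'⟩ := hfu δ hδ
    have hev2 := hg M (min (δu/2) 1) (by positivity)
    filter_upwards [hev1, hev2] with n hn1 hn2
    have hcompl_le : (μs n : Measure ℝ) Uᶜ ≤ ENNReal.ofReal δ := by
      have h1 : (μs n : Measure ℝ) Uᶜ = 1 - (μs n : Measure ℝ) U := by
        rw [measure_compl hUmeas (measure_ne_top _ _), measure_univ]
      rw [h1]
      have h2 : (1:ℝ≥0∞) ≤ (μs n : Measure ℝ) U + d := tsub_le_iff_right.mp hn1.le
      calc (1:ℝ≥0∞) - (μs n : Measure ℝ) U ≤ d :=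
            tsub_le_iff_right.mpr (by rwa [add_comm] at h2)
        _ ≤ ENNReal.ofReal δ := min_le_left _ _
    have hpt : ∀ x : ℝ, ‖f (g n x) - f x‖ ≤ δ + Set.indicator Uᶜ (fun _ => 2 * ‖f‖) x := by
      intro x
      by_cases hx : x ∈ U
      · obtain ⟨hx1, hx2⟩ := hx
        have hx' : |x| ≤ (M:ℝ) := abs_le.mpr ⟨by linarith, by linarith⟩
        have hgx := hn2 x hx'
        obtain ⟨hgx1, hgx2⟩ := abs_le.mp hgx
        have hmin1 : min (δu/2) 1 ≤ 1 := min_le_right _ _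
        obtain ⟨hxl, hxr⟩ := abs_le.mp hx'
        have hxK : x ∈ K := Set.mem_Icc.mpr ⟨by linarith, by linarith⟩
        have hgK : g n x ∈ K := Set.mem_Icc.mpr ⟨by linarith, by linarith⟩
        have hdist : dist (g n x) x < δu := by
          rw [Real.dist_eq]
          calc |g n x - x| ≤ min (δu/2) 1 := hgx
            _ ≤ δu/2 := min_le_left _ _
            _ < δu := by linarith
        have hfd := hδu' (g n x) hgK x hxK hdist
        rw [Set.indicator_of_notMem ((by simp only [Set.notMem_compl_iff]; exact Set.mem_Ioo.mpr ⟨hx1, hx2⟩))]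
        rw [Real.dist_eq] at hfd
        have hne : ‖f (g n x) - f x‖ = |f (g n x) - f x| := rfl
        rw [hne]
        linarith
      · rw [Set.indicator_of_mem (Set.mem_compl hx)]
        have h1 := f.norm_coe_le_norm (g n x)
        have h2 := f.norm_coe_le_norm x
        have h3 : ‖f (g n x) - f x‖ ≤ ‖f (g n x)‖ + ‖f x‖ := norm_sub_le _ _
        linarith
    have hbint : Integrable (fun x => δ + Set.indicator Uᶜ (fun _ => 2*‖f‖) x)
        (μs n : Measure ℝ) :=
      (integrable_const δ).add ((integrable_const (2*‖f‖)).indicator hUmeas.compl)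
    have hInt : ∫ x, ‖f (g n x) - f x‖ ∂(μs n : Measure ℝ)
        ≤ ∫ x, (δ + Set.indicator Uᶜ (fun _ => 2*‖f‖) x) ∂(μs n : Measure ℝ) :=
      integral_mono_of_nonneg (Eventually.of_forall fun x => norm_nonneg _) hbint
        (Eventually.of_forall hpt)
    have hval : ∫ x, (δ + Set.indicator Uᶜ (fun _ => 2*‖f‖) x) ∂(μs n : Measure ℝ)
        = δ + ((μs n : Measure ℝ) Uᶜ).toReal * (2*‖f‖) := by
      rw [integral_add (integrable_const δ) ((integrable_const _).indicator hUmeas.compl),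
        integral_const, probReal_univ, one_smul,
        integral_indicator_const _ hUmeas.compl, smul_eq_mul, Measure.real]
    have htoReal : ((μs n : Measure ℝ) Uᶜ).toReal ≤ δ :=
      ENNReal.toReal_le_of_le_ofReal hδ.le hcompl_le
    calc ‖∫ x, (f (g n x) - f x) ∂(μs n : Measure ℝ)‖
        ≤ ∫ x, ‖f (g n x) - f x‖ ∂(μs n : Measure ℝ) := norm_integral_le_integral_norm _
      _ ≤ δ + ((μs n : Measure ℝ) Uᶜ).toReal * (2*‖f‖) := by rw [← hval]; exact hInt
      _ ≤ δ + δ * (2*‖f‖) := by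
          have : ((μs n : Measure ℝ) Uᶜ).toReal * (2*‖f‖) ≤ δ * (2*‖f‖) :=
            mul_le_mul_of_nonneg_right htoReal (by positivity)
          linarith
      _ = ε/2 := by rw [hδdef]; field_simp
      _ < ε := by linarith
  have heq : (fun n => ∫ x, f (g n x) ∂(μs n : Measure ℝ))
      = fun n => (∫ x, (f (g n x) - f x) ∂(μs n : Measure ℝ))
          + ∫ x, f x ∂(μs n : Measure ℝ) := by
    funext n
    rw [integral_sub (hfint n) (hfint' n)]
    ring
  rw [heq]
  simpa using hD.add hconv

/-- Transfer lemma: convergence in distribution is preserved by applying maps `g n` which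
converge to the identity uniformly on compacts. -/
lemma bridge {Ω : Type*} [MeasurableSpace Ω] (μ : Measure Ω) [IsProbabilityMeasure μ]
    (Y Z : ℕ → Ω → ℝ) (hYm : ∀ n, Measurable (Y n))
    (g : ℕ → ℝ → ℝ) (hgm : ∀ n, Measurable (g n))
    (hgY : ∀ n ω, g n (Y n ω) = Z n ω)
    (hg : ∀ M : ℝ, ∀ ε > 0, ∀ᶠ n in atTop, ∀ y : ℝ, |y| ≤ M → |g n y - y| ≤ ε)
    (hY : TendstoInDistribution μ Y (gaussianReal 0 1)) :
    TendstoInDistribution μ Z (gaussianReal 0 1) := by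
  intro f
  set νP : ProbabilityMeasure ℝ := ⟨gaussianReal 0 1, inferInstance⟩ with hνP
  set μY : ℕ → ProbabilityMeasure ℝ := fun n =>
    ⟨μ.map (Y n), Measure.isProbabilityMeasure_map (hYm n).aemeasurable⟩ with hμY
  have hmap : ∀ (n : ℕ) (φ : ℝ → ℝ), Measurable φ →
      ∫ x, φ x ∂(μY n : Measure ℝ) = ∫ ω, φ (Y n ω) ∂μ := fun n φ hφ =>
    integral_map (hYm n).aemeasurable hφ.aestronglyMeasurable
  have hYconv : Tendsto μY atTop (𝓝 νP) := by
    rw [ProbabilityMeasure.tendsto_iff_forall_integral_tendsto]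
    intro f'
    have e1 : ∀ n, ∫ x, f' x ∂(μY n : Measure ℝ) = ∫ ω, f' (Y n ω) ∂μ := fun n =>
      hmap n f' f'.continuous.measurable
    simp only [e1]
    exact hY f'
  have hkey := key_tendsto hYconv hgm hg f
  have e2 : ∀ n, ∫ x, f (g n x) ∂(μY n : Measure ℝ) = ∫ ω, f (Z n ω) ∂μ := by
    intro n
    rw [hmap n (fun x => f (g n x)) (f.continuous.measurable.comp (hgm n))]
    congr 1
    funext ω
    rw [hgY]
  simp only [e2] at hkey
  exact hkey

/-- Lemma 2.2: for positive random variables `X n` and `b n → 0`,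
`ln X_n ~ ASN(a_n, b_n)` iff `X_n ~ ASN(e^{a_n}, b_n e^{2 a_n})`. -/
theorem log_asn_iff_asn {Ω : Type*} [MeasurableSpace Ω] (μ : Measure Ω)
    [IsProbabilityMeasure μ] (X : ℕ → Ω → ℝ) (hXmeas : ∀ n, Measurable (X n))
    (hXpos : ∀ n ω, 0 < X n ω)
    (a b : ℕ → ℝ) (hb : ∀ n, 0 < b n) (hb0 : Tendsto b atTop (𝓝 0)) :
    TendstoInDistribution μ
        (fun n ω => (Real.log (X n ω) - a n) / Real.sqrt (b n)) (gaussianReal 0 1)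
      ↔ TendstoInDistribution μ
        (fun n ω => (X n ω - Real.exp (a n)) / (Real.sqrt (b n) * Real.exp (a n)))
        (gaussianReal 0 1) := by
  have hsb : ∀ n, 0 < Real.sqrt (b n) := fun n => Real.sqrt_pos.mpr (hb n)
  have hsb0 : Tendsto (fun n => Real.sqrt (b n)) atTop (𝓝 0) := by
    have := (Real.continuous_sqrt.tendsto 0).comp hb0
    simpa [Function.comp_def] using this
  have hsmall : ∀ c : ℝ, 0 < c → ∀ᶠ n in atTop, Real.sqrt (b n) < c := fun c hc =>
    hsb0.eventually_lt_const hc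
  constructor
  · -- forward: log version → plain version, with g n y = (exp(√b y) - 1)/√b
    intro hY
    refine bridge μ (fun n ω => (Real.log (X n ω) - a n) / Real.sqrt (b n)) _
      (fun n => ((Real.measurable_log.comp (hXmeas n)).sub_const _).div_const _)
      (fun n y => (Real.exp (Real.sqrt (b n) * y) - 1) / Real.sqrt (b n))
      (fun n => ((Real.measurable_exp.comp (measurable_id.const_mul _)).sub_const _).div_const _)
      ?_ ?_ hY
    · intro n ω
      have hs := hsb n
      have hX := hXpos n ω
      have h1 : Real.sqrt (b n) * ((Real.log (X n ω) - a n) / Real.sqrt (b n))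
          = Real.log (X n ω) - a n := mul_div_cancel₀ _ hs.ne'
      rw [h1, Real.exp_sub, Real.exp_log hX]
      rw [div_sub_one (Real.exp_ne_zero (a n)), div_div, mul_comm (Real.exp (a n))]
    · intro M ε hε
      have h1 := hsmall (1/(|M|+1)) (by positivity)
      have h2 := hsmall (ε/(M^2+1)) (by positivity)
      filter_upwards [h1, h2] with n hn1 hn2
      intro y hy
      set s := Real.sqrt (b n) with hsdef
      have hs := hsb n
      have hM0 : 0 ≤ M := le_trans (abs_nonneg y) hy
      have hsy : |s * y| ≤ 1 := by
        rw [abs_mul, abs_of_pos hs]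
        calc s * |y| ≤ s * M := mul_le_mul_of_nonneg_left hy hs.le
          _ ≤ (1/(|M|+1)) * M := mul_le_mul_of_nonneg_right hn1.le hM0
          _ ≤ 1 := by
              rw [abs_of_nonneg hM0]
              rw [div_mul_eq_mul_div, one_mul, div_le_one (by linarith)]
              linarith
      have hexp := Real.abs_exp_sub_one_sub_id_le hsy
      have heq : (Real.exp (s * y) - 1) / s - y = (Real.exp (s*y) - 1 - s*y)/s := by
        rw [sub_div _ (s*y), mul_div_cancel_left₀ y (hs.ne' : s ≠ 0)]
      rw [heq, abs_div, abs_of_pos hs, div_le_iff₀ hs]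
      have hy2 : y^2 ≤ M^2 := by nlinarith [abs_le.mp hy, abs_nonneg y]
      calc |Real.exp (s*y) - 1 - s*y| ≤ (s*y)^2 := hexp
        _ = s * (s * y^2) := by ring
        _ ≤ s * ((ε/(M^2+1)) * M^2) := by
            apply mul_le_mul_of_nonneg_left _ hs.le
            calc s * y^2 ≤ s * M^2 := mul_le_mul_of_nonneg_left hy2 hs.le
              _ ≤ (ε/(M^2+1)) * M^2 := mul_le_mul_of_nonneg_right hn2.le (by positivity)
        _ ≤ s * ε := by
            apply mul_le_mul_of_nonneg_left _ hs.le
            rw [div_mul_eq_mul_div, div_le_iff₀ (by positivity)]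
            nlinarith
        _ = ε * s := mul_comm _ _
  · -- backward: plain version → log version, with g n z = log(1 + √b z)/√b
    intro hZ
    refine bridge μ (fun n ω => (X n ω - Real.exp (a n)) / (Real.sqrt (b n) * Real.exp (a n))) _
      (fun n => ((hXmeas n).sub_const _).div_const _)
      (fun n z => Real.log (1 + Real.sqrt (b n) * z) / Real.sqrt (b n))
      (fun n => ((Real.measurable_log.comp ((measurable_id.const_mul _).const_add 1)).div_const _))
      ?_ ?_ hZ
    · intro n ω
      have hs := hsb n
      have hX := hXpos n ω
      have he := Real.exp_ne_zero (a n)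
      have h1 : 1 + Real.sqrt (b n) *
          ((X n ω - Real.exp (a n)) / (Real.sqrt (b n) * Real.exp (a n)))
          = X n ω / Real.exp (a n) := by
        field_simp
        ring
      rw [h1, Real.log_div hX.ne' he, Real.log_exp]
    · intro M ε hε
      have h1 := hsmall (1/(2*(|M|+1))) (by positivity)
      have h2 := hsmall (ε/(4*(M^2+1))) (by positivity)
      filter_upwards [h1, h2] with n hn1 hn2
      intro z hz
      set s := Real.sqrt (b n) with hsdef
      have hs := hsb n
      have hM0 : 0 ≤ M := le_trans (abs_nonneg z) hz
      have hsz : |s * z| ≤ 1/2 := by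
        rw [abs_mul, abs_of_pos hs]
        calc s * |z| ≤ s * M := mul_le_mul_of_nonneg_left hz hs.le
          _ ≤ (1/(2*(|M|+1))) * M := mul_le_mul_of_nonneg_right hn1.le hM0
          _ ≤ 1/2 := by
              rw [abs_of_nonneg hM0]
              rw [div_mul_eq_mul_div, one_mul, div_le_div_iff₀ (by linarith) (by norm_num)]
              linarith
      have hlog := abs_log_one_add_sub_le hsz
      have heq : Real.log (1 + s * z) / s - z = (Real.log (1 + s*z) - s*z)/s := by
        rw [sub_div _ (s*z), mul_div_cancel_left₀ z (hs.ne' : s ≠ 0)]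
      rw [heq, abs_div, abs_of_pos hs, div_le_iff₀ hs]
      have hz2 : z^2 ≤ M^2 := by nlinarith [abs_le.mp hz, abs_nonneg z]
      calc |Real.log (1 + s*z) - s*z| ≤ 4 * (s*z)^2 := hlog
        _ = s * (4 * (s * z^2)) := by ring
        _ ≤ s * ε := by
            apply mul_le_mul_of_nonneg_left _ hs.le
            have hsz2 : s * z^2 ≤ (ε/(4*(M^2+1))) * M^2 := by
              calc s * z^2 ≤ s * M^2 := mul_le_mul_of_nonneg_left hz2 hs.le
                _ ≤ (ε/(4*(M^2+1))) * M^2 := mul_le_mul_of_nonneg_right hn2.le (by positivity)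
            have : (ε/(4*(M^2+1))) * M^2 ≤ ε/4 := by
              rw [div_mul_eq_mul_div, div_le_div_iff₀ (by positivity) (by norm_num)]
              nlinarith
            linarith
        _ = ε * s := mul_comm _ _
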